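/- For every integer m ≥ 1, let b^(k) be the k-th column of the inverse triangle B of H^(m) and let t be the sequence t_n = Σ_{k=1}^{n} B_{nk} (so that H^(m)t is the constant sequence 1). Then {t, b^(1), b^(2), ...} is a basis of h_c(Δ^(m)) equipped with the norm ‖x‖ = sup_n |(H^(m)x)_n|: every x ∈ h_c(Δ^(m)) has a unique representation x = s·t + Σ_k ((H^(m)x)_k − s) b^(k), where s = lim_{k→∞} (H^(m)x)_k and the series converges to x − s·t in this norm. -/
import Mathlib


open Filter Finset Topology

/- Real sequences are modelled as functions `ℕ → ℝ`, where the Lean index `n : ℕ`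
corresponds to the paper's index `n + 1` (the paper indexes sequences by `k ≥ 1`).
Thus the paper's entry `h_{nk} = ∑_{i=k}^{n} (-1)^{i-k} C(m, i-k) / (n+i-1)`
(for `1 ≤ k ≤ n`) becomes, with 0-based indices,
`hMat m n k = ∑_{i ∈ Icc k n} (-1)^{i-k} C(m, i-k) / (n+i+1)`. -/

/-- The entries of the triangle matrix `H^(m) = H Δ^(m)` (0-based indexing). -/
noncomputable def hMat (m n k : ℕ) : ℝ :=
  ∑ i ∈ Finset.Icc k n, (-1 : ℝ) ^ (i - k) * (Nat.choose m (i - k) : ℝ) / ((n + i + 1 : ℕ) : ℝ)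

/-- The `H^(m)`-transform of a sequence: `(H^(m) x)_n = ∑_{k=1}^{n} h_{nk} x_k`. -/
noncomputable def hTrans (m : ℕ) (x : ℕ → ℝ) (n : ℕ) : ℝ :=
  ∑ k ∈ Finset.range (n + 1), hMat m n k * x k

/-- `h_0(Δ^(m))`: sequences whose `H^(m)`-transform tends to `0`. -/
def hZero (m : ℕ) : Set (ℕ → ℝ) := {x | Tendsto (hTrans m x) atTop (𝓝 0)}

/-- `h_c(Δ^(m))`: sequences whose `H^(m)`-transform converges. -/
def hConv (m : ℕ) : Set (ℕ → ℝ) := {x | ∃ L : ℝ, Tendsto (hTrans m x) atTop (𝓝 L)}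

/-- `h_∞(Δ^(m))`: sequences whose `H^(m)`-transform is bounded. -/
def hBdd (m : ℕ) : Set (ℕ → ℝ) := {x | ∃ M : ℝ, ∀ n, |hTrans m x n| ≤ M}

/-- The space `c₀` of null real sequences. -/
def c0Seq : Set (ℕ → ℝ) := {y | Tendsto y atTop (𝓝 0)}

/-- The space `c` of convergent real sequences. -/
def cSeq : Set (ℕ → ℝ) := {y | ∃ L : ℝ, Tendsto y atTop (𝓝 L)}

/-- The space `ℓ∞` of bounded real sequences. -/
def linfSeq : Set (ℕ → ℝ) := {y | ∃ M : ℝ, ∀ n, |y n| ≤ M}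

/-- The sup norm `‖y‖ = sup_n |y_n|` of a sequence. -/
noncomputable def supNorm (y : ℕ → ℝ) : ℝ := ⨆ n, |y n|

/-- The norm `‖x‖ = sup_n |(H^(m) x)_n|` on the Hilbert difference sequence spaces. -/
noncomputable def hNorm (m : ℕ) (x : ℕ → ℝ) : ℝ := supNorm (hTrans m x)


section Aux

variable (m : ℕ) (B : ℕ → ℕ → ℝ)

lemma hTrans_sub (x y : ℕ → ℝ) (n : ℕ) :
    hTrans m (x - y) n = hTrans m x n - hTrans m y n := by
  simp [hTrans, mul_sub, Finset.sum_sub_distrib]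

lemma hTrans_smul (s : ℝ) (y : ℕ → ℝ) (n : ℕ) :
    hTrans m (s • y) n = s * hTrans m y n := by
  rw [hTrans, hTrans, Finset.mul_sum]
  exact Finset.sum_congr rfl fun k _ => by simp [Pi.smul_apply]; ring

lemma hTrans_col (hBtri : ∀ n k : ℕ, n < k → B n k = 0)
    (hBright : ∀ n k : ℕ,
      (∑ j ∈ Finset.Icc k n, hMat m n j * B j k) = if n = k then 1 else 0)
    (k n : ℕ) :
    (∑ j ∈ Finset.range (n + 1), hMat m n j * B j k) = if n = k then 1 else 0 := by
  rcases le_or_gt k n with h | h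
  · rw [← hBright n k]
    refine (Finset.sum_subset ?_ ?_).symm
    · intro j hj
      simp only [Finset.mem_Icc] at hj
      simp only [Finset.mem_range]
      omega
    · intro j hj hj'
      simp only [Finset.mem_range] at hj
      simp only [Finset.mem_Icc, not_and, not_le] at hj'
      rw [hBtri j k (by omega), mul_zero]
  · rw [if_neg (by omega)]
    refine Finset.sum_eq_zero fun j hj => ?_
    simp only [Finset.mem_range] at hj
    rw [hBtri j k (by omega), mul_zero]

lemma hTrans_t (hBtri : ∀ n k : ℕ, n < k → B n k = 0)
    (hBright : ∀ n k : ℕ,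
      (∑ j ∈ Finset.Icc k n, hMat m n j * B j k) = if n = k then 1 else 0)
    (n : ℕ) :
    hTrans m (fun j => ∑ k ∈ Finset.range (j + 1), B j k) n = 1 := by
  have step : hTrans m (fun j => ∑ k ∈ Finset.range (j + 1), B j k) n
      = ∑ j ∈ Finset.range (n + 1), ∑ k ∈ Finset.range (n + 1), hMat m n j * B j k := by
    unfold hTrans
    refine Finset.sum_congr rfl fun j hj => ?_
    simp only [Finset.mem_range] at hj
    rw [Finset.mul_sum]
    refine Finset.sum_subset ?_ ?_
    · intro k hk
      simp only [Finset.mem_range] at hk ⊢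
      omega
    · intro k hk hk'
      simp only [Finset.mem_range] at hk hk'
      rw [hBtri j k (by omega), mul_zero]
  rw [step, Finset.sum_comm]
  have : ∀ k ∈ Finset.range (n + 1),
      (∑ j ∈ Finset.range (n + 1), hMat m n j * B j k) = if n = k then 1 else 0 :=
    fun k _ => hTrans_col m B hBtri hBright k n
  rw [Finset.sum_congr rfl this, Finset.sum_ite_eq (Finset.range (n + 1)) n (fun _ => (1 : ℝ))]
  simp

lemma hTrans_combo (hBtri : ∀ n k : ℕ, n < k → B n k = 0)
    (hBright : ∀ n k : ℕ,
      (∑ j ∈ Finset.Icc k n, hMat m n j * B j k) = if n = k then 1 else 0)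
    (lam : ℕ → ℝ) (K n : ℕ) :
    hTrans m (fun j => ∑ k ∈ Finset.range (K + 1), lam k * B j k) n
      = if n ≤ K then lam n else 0 := by
  have h1 : ∀ j, hMat m n j * ∑ k ∈ Finset.range (K + 1), lam k * B j k
      = ∑ k ∈ Finset.range (K + 1), lam k * (hMat m n j * B j k) := by
    intro j
    rw [Finset.mul_sum]
    exact Finset.sum_congr rfl fun k _ => by ring
  unfold hTrans
  rw [Finset.sum_congr rfl fun j _ => h1 j, Finset.sum_comm]
  have h2 : ∀ k ∈ Finset.range (K + 1),
      (∑ j ∈ Finset.range (n + 1), lam k * (hMat m n j * B j k))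
        = if n = k then lam k else 0 := by
    intro k _
    rw [← Finset.mul_sum, hTrans_col m B hBtri hBright k n]
    simp
  rw [Finset.sum_congr rfl h2, Finset.sum_ite_eq (Finset.range (K + 1)) n lam]
  simp [Nat.lt_succ_iff]

lemma hTrans_remainder (hBtri : ∀ n k : ℕ, n < k → B n k = 0)
    (hBright : ∀ n k : ℕ,
      (∑ j ∈ Finset.Icc k n, hMat m n j * B j k) = if n = k then 1 else 0)
    (x : ℕ → ℝ) (s' : ℝ) (lam : ℕ → ℝ) (K n : ℕ) :
    hTrans m ((x - s' • (fun n => ∑ k ∈ Finset.range (n + 1), B n k)) -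
        (fun n => ∑ k ∈ Finset.range (K + 1), lam k * B n k)) n
      = (hTrans m x n - s') - (if n ≤ K then lam n else 0) := by
  rw [hTrans_sub, hTrans_sub, hTrans_smul, hTrans_t m B hBtri hBright,
    hTrans_combo m B hBtri hBright, mul_one]

end Aux


/-- With `t_n = ∑_k B n k` (so `H^(m) t = 1`), the family `{t, b^(1), b^(2), …}` is a basis
of `h_c(Δ^(m))`: every `x` has the unique representation
`x = s t + ∑_k ((H^(m) x)_k - s) b^(k)` with `s = lim_k (H^(m) x)_k`. -/
theorem hilbert_diff_hc_basis (m : ℕ) (hm : 1 ≤ m)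
    (B : ℕ → ℕ → ℝ)
    (hBtri : ∀ n k : ℕ, n < k → B n k = 0)
    (hBright : ∀ n k : ℕ, (∑ j ∈ Finset.Icc k n, hMat m n j * B j k) = if n = k then 1 else 0)
    (hBleft : ∀ n k : ℕ, (∑ j ∈ Finset.Icc k n, B n j * hMat m j k) = if n = k then 1 else 0) :
    ∀ x ∈ hConv m, ∀ s : ℝ, Tendsto (hTrans m x) atTop (𝓝 s) →
      Tendsto (fun K => hNorm m
          ((x - s • (fun n => ∑ k ∈ Finset.range (n + 1), B n k)) -
            (fun n => ∑ k ∈ Finset.range (K + 1), (hTrans m x k - s) * B n k)))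
        atTop (𝓝 0) ∧
      ∀ (s' : ℝ) (lam : ℕ → ℝ),
        Tendsto (fun K => hNorm m
            ((x - s' • (fun n => ∑ k ∈ Finset.range (n + 1), B n k)) -
              (fun n => ∑ k ∈ Finset.range (K + 1), lam k * B n k)))
          atTop (𝓝 0) →
        s' = s ∧ lam = fun k => hTrans m x k - s := by
  intro x _hx s hs
  set t : ℕ → ℝ := fun n => ∑ k ∈ Finset.range (n + 1), B n k with ht
  -- boundedness of |hTrans x n - s|
  have habs : Tendsto (fun n => |hTrans m x n - s|) atTop (𝓝 0) := by
    have h : Tendsto (fun n => hTrans m x n - s) atTop (𝓝 (s - s)) :=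
      hs.sub tendsto_const_nhds
    rw [sub_self] at h
    simpa using h.abs
  obtain ⟨C, hC⟩ := habs.bddAbove_range
  have hCle : ∀ n, |hTrans m x n - s| ≤ C := fun n => hC (Set.mem_range_self n)
  constructor
  · -- convergence part
    have hrw : ∀ K : ℕ, hNorm m
        ((x - s • t) - (fun n => ∑ k ∈ Finset.range (K + 1), (hTrans m x k - s) * B n k))
        = ⨆ n, |(hTrans m x n - s) - (if n ≤ K then hTrans m x n - s else 0)| := by
      intro K
      unfold hNorm supNorm
      congr 1
      funext n
      rw [hTrans_remainder m B hBtri hBright x s (fun k => hTrans m x k - s) K n]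
    rw [Metric.tendsto_atTop]
    intro ε hε
    obtain ⟨N, hN⟩ := (Metric.tendsto_atTop.mp hs) (ε / 2) (by linarith)
    refine ⟨N, fun K hK => ?_⟩
    have hb : ∀ n, |(hTrans m x n - s) - (if n ≤ K then hTrans m x n - s else 0)| ≤ ε / 2 := by
      intro n
      by_cases hn : n ≤ K
      · simp [hn]
        linarith
      · rw [if_neg hn]
        have : N ≤ n := by omega
        have := hN n this
        rw [Real.dist_eq] at this
        simp only [sub_zero]
        linarith
    have hle : (⨆ n, |(hTrans m x n - s) - (if n ≤ K then hTrans m x n - s else 0)|) ≤ ε / 2 :=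
      Real.iSup_le hb (by linarith)
    have hge : (0 : ℝ) ≤ ⨆ n, |(hTrans m x n - s) - (if n ≤ K then hTrans m x n - s else 0)| :=
      Real.iSup_nonneg fun n => abs_nonneg _
    rw [hrw K, Real.dist_eq]
    rw [abs_of_nonneg (by linarith)]
    linarith
  · -- uniqueness part
    intro s' lam hconv
    set g : ℕ → ℝ := fun K => ⨆ n, |(hTrans m x n - s') - (if n ≤ K then lam n else 0)| with hgdef
    have hrw : (fun K => hNorm m
        ((x - s' • t) - (fun n => ∑ k ∈ Finset.range (K + 1), lam k * B n k))) = g := by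
      funext K
      unfold hNorm supNorm
      congr 1
      funext n
      rw [hTrans_remainder m B hBtri hBright x s' lam K n]
    have hg0 : Tendsto g atTop (𝓝 0) := by rw [← hrw]; exact hconv
    -- each term is bounded by g K
    have hub : ∀ K n, |(hTrans m x n - s') - (if n ≤ K then lam n else 0)| ≤ g K := by
      intro K n
      have hbdd : BddAbove (Set.range fun n =>
          |(hTrans m x n - s') - (if n ≤ K then lam n else 0)|) := by
        refine ⟨C + |s - s'| + ∑ k ∈ Finset.range (K + 1), |lam k|, ?_⟩
        rintro _ ⟨n, rfl⟩
        have h1 : |hTrans m x n - s'| ≤ C + |s - s'| := by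
          have : |hTrans m x n - s'| ≤ |hTrans m x n - s| + |s - s'| := by
            have := abs_sub_le (hTrans m x n) s s'
            linarith
          have := hCle n
          linarith
        have h2 : |(if n ≤ K then lam n else 0)| ≤ ∑ k ∈ Finset.range (K + 1), |lam k| := by
          by_cases hn : n ≤ K
          · rw [if_pos hn]
            exact Finset.single_le_sum (f := fun k => |lam k|)
              (fun k _ => abs_nonneg _) (Finset.mem_range.mpr (by omega))
          · rw [if_neg hn]
            simpa using Finset.sum_nonneg (fun k _ => abs_nonneg (lam k))
        calc |(hTrans m x n - s') - (if n ≤ K then lam n else 0)|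
            ≤ |hTrans m x n - s'| + |(if n ≤ K then lam n else 0)| := abs_sub _ _
          _ ≤ C + |s - s'| + ∑ k ∈ Finset.range (K + 1), |lam k| := by linarith
      exact le_ciSup hbdd n
    -- lam n = hTrans x n - s'
    have hlam : ∀ n, lam n = hTrans m x n - s' := by
      intro n
      have hev : ∀ᶠ K in atTop, |(hTrans m x n - s') - lam n| ≤ g K := by
        refine eventually_atTop.mpr ⟨n, fun K hK => ?_⟩
        have := hub K n
        rwa [if_pos hK] at this
      have : |(hTrans m x n - s') - lam n| ≤ 0 := ge_of_tendsto hg0 hev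
      have := abs_nonneg ((hTrans m x n - s') - lam n)
      have heq : |(hTrans m x n - s') - lam n| = 0 := le_antisymm ‹_› ‹_›
      have := abs_eq_zero.mp heq
      linarith
    -- s' = s
    have hss : s' = s := by
      have hKbd : ∀ K, |s - s'| ≤ g K := by
        intro K
        have hlim : Tendsto (fun n => |(hTrans m x n - s') - (if n ≤ K then lam n else 0)|)
            atTop (𝓝 |s - s'|) := by
          have h1 : Tendsto (fun n => (hTrans m x n - s') - (if n ≤ K then lam n else 0))
              atTop (𝓝 (s - s')) := by
            have h2 : Tendsto (fun n => hTrans m x n - s') atTop (𝓝 (s - s')) :=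
              hs.sub tendsto_const_nhds
            refine h2.congr' ?_
            filter_upwards [eventually_ge_atTop (K + 1)] with n hn
            rw [if_neg (by omega), sub_zero]
          exact h1.abs
        exact le_of_tendsto hlim (Eventually.of_forall fun n => hub K n)
      have : |s - s'| ≤ 0 := ge_of_tendsto hg0 (Eventually.of_forall hKbd)
      have h0 := abs_nonneg (s - s')
      have : s - s' = 0 := abs_eq_zero.mp (le_antisymm ‹_› h0)
      linarith
    refine ⟨hss, ?_⟩
    funext n
    rw [hlam n, hss]
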